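/- There is no infinite binary word avoiding all squares yy with |y| ≥ 2; in fact, every binary word of length at least 19 contains a square yy with |y| ≥ 2. -/

import Mathlib

/-- `x` occurs as a factor (contiguous subword) of the infinite word `w`. -/
def FactorOf {α : Type*} (x : List α) (w : ℕ → α) : Prop :=
  ∃ i, x = (List.range x.length).map (fun j => w (i + j))

/-- Boolean test: `w` has no square `y ++ y` with `2 ≤ |y|` starting at position 0. -/
def noSqB (w : List (Fin 2)) : Bool :=
  decide (∀ k < w.length, 2 ≤ k → k + k ≤ w.length →
    w.take k ≠ (w.drop k).take k)

lemma sq_of_noSqB_false {w : List (Fin 2)} (h : noSqB w = false) :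
    ∃ y : List (Fin 2), 2 ≤ y.length ∧ (y ++ y) <:+: w := by
  have h' := of_decide_eq_false h
  push_neg at h'
  obtain ⟨k, _, hk2, hk, heq⟩ := h'
  refine ⟨w.take k, ?_, ?_⟩
  · rw [List.length_take]; omega
  · have : w.take k ++ w.take k = w.take (k + k) := by
      rw [List.take_add, ← heq]
    rw [this]
    exact (List.take_prefix (k + k) w).isInfix

def Good (w : List (Fin 2)) : Prop :=
  ∀ y : List (Fin 2), 2 ≤ y.length → ¬ (y ++ y) <:+: w

def allGood : ℕ → List (List (Fin 2))
  | 0 => [[]]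
  | n + 1 => (allGood n).flatMap fun w => ([0 :: w, 1 :: w]).filter noSqB

lemma good_tail {a : Fin 2} {w : List (Fin 2)} (h : Good (a :: w)) : Good w := by
  intro y hy hinf
  exact h y hy (hinf.trans (w.suffix_cons a).isInfix)

lemma mem_allGood : ∀ n (w : List (Fin 2)), w.length = n → Good w → w ∈ allGood n := by
  intro n
  induction n with
  | zero =>
    intro w hw _
    simp [allGood, List.length_eq_zero_iff.mp hw]
  | succ n ih =>
    intro w hw hg
    match w with
    | a :: w' =>
      have hw' : w'.length = n := by simpa using hw
      have hmem : w' ∈ allGood n := ih w' hw' (good_tail hg)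
      have hns : noSqB (a :: w') = true := by
        by_contra hfalse
        obtain ⟨y, hy, hinf⟩ := sq_of_noSqB_false (Bool.eq_false_iff.mpr hfalse)
        exact hg y hy hinf
      simp only [allGood, List.mem_flatMap]
      refine ⟨w', hmem, ?_⟩
      rw [List.mem_filter]
      constructor
      · fin_cases a <;> simp
      · exact hns

set_option maxHeartbeats 2000000 in
lemma allGood19 : allGood 19 = [] := by decide

lemma list_part : ∀ w : List (Fin 2), 19 ≤ w.length →
    ∃ y : List (Fin 2), 2 ≤ y.length ∧ (y ++ y) <:+: w := by
  intro w hw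
  by_contra hcon
  push_neg at hcon
  have hgood : Good (w.take 19) := by
    intro y hy hinf
    exact hcon y hy (hinf.trans (List.take_prefix 19 w).isInfix)
  have hlen : (w.take 19).length = 19 := by
    rw [List.length_take]; omega
  have := mem_allGood 19 (w.take 19) hlen hgood
  rw [allGood19] at this
  exact absurd this List.not_mem_nil

theorem no_infinite_word_avoiding_squares_ge_two :
    (∀ w : ℕ → Fin 2, ∃ y : List (Fin 2), 2 ≤ y.length ∧ FactorOf (y ++ y) w) ∧
    (∀ w : List (Fin 2), 19 ≤ w.length →
      ∃ y : List (Fin 2), 2 ≤ y.length ∧ (y ++ y) <:+: w) := by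
  constructor
  · intro w
    obtain ⟨y, hy, hinf⟩ := list_part ((List.range 19).map w) (by simp)
    refine ⟨y, hy, ?_⟩
    obtain ⟨s, t, hst⟩ := hinf
    refine ⟨s.length, ?_⟩
    have hyy : (y ++ y).length = y.length + y.length := by simp
    have hlen : s.length + (y.length + y.length) + t.length = 19 := by
      have := congrArg List.length hst
      simp only [List.length_append, List.length_map, List.length_range] at this
      omega
    apply List.ext_getElem
    · simp
    · intro j h1 h2
      simp only [List.getElem_map, List.getElem_range]
      have hj : j < (y ++ y).length := h1
      have hj' : j < y.length + y.length := hyy ▸ hj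
      have hb : s.length + j < ((s ++ (y ++ y)) ++ t).length := by
        simp only [List.length_append]; omega
      have e1 : ((s ++ (y ++ y)) ++ t)[s.length + j]'hb
          = ((List.range 19).map w)[s.length + j]'(by rw [← hst]; exact hb) :=
        List.getElem_of_eq hst hb
      have e2 : ((s ++ (y ++ y)) ++ t)[s.length + j]'hb = (y ++ y)[j]'hj := by
        rw [List.getElem_append_left (by simp only [List.length_append]; omega : s.length + j < (s ++ (y ++ y)).length)]
        rw [List.getElem_append_right (by omega)]
        simp
      have e3 : ((List.range 19).map w)[s.length + j]'(by rw [← hst]; exact hb)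
          = w (s.length + j) := by
        simp
      rw [← e2, e1, e3]
  · exact list_part
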